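/- Let μ_n be a sequence in M and μ ∈ M. If W^{a,b}_p(μ_n, μ) → 0, then the family {μ_n} is tight and μ_n converges weakly to μ (i.e. ∫ f dμ_n → ∫ f dμ for every bounded continuous f : ℝ^d → ℝ). -/

import Mathlib

open MeasureTheory ENNReal Filter Topology

noncomputable section

/-- `ℝ^d` as a Euclidean space. -/
abbrev Euc (d : ℕ) := EuclideanSpace ℝ (Fin d)

variable {E : Type*} [NormedAddCommGroup E] [MeasurableSpace E]

/-- Total mass `|μ| = μ(ℝ^d)` of a nonnegative measure, as a real number. -/
def mass (μ : Measure E) : ℝ := (μ Set.univ).toReal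

/-- Total variation norm `|μ - ν|` of the difference of two nonnegative finite
measures, computed via the Jordan decomposition `(μ - ν) + (ν - μ)`. -/
def tvDist (μ ν : Measure E) : ℝ := ((μ - ν) Set.univ + (ν - μ) Set.univ).toReal

/-- `μ` has finite `p`-th moment. -/
def FinMom (p : ℝ) (μ : Measure E) : Prop :=
  ∫⁻ x, ENNReal.ofReal (‖x‖ ^ p) ∂μ < ⊤

/-- `π` is a transference plan from `μ` to `ν`: its first and second marginals
are `μ` and `ν` respectively. -/
def IsPlan (π : Measure (E × E)) (μ ν : Measure E) : Prop :=
  π.map Prod.fst = μ ∧ π.map Prod.snd = ν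

/-- Transportation cost `∫ |x - y|^p dπ(x,y)` of a plan `π`. -/
def Wcost (p : ℝ) (π : Measure (E × E)) : ℝ≥0∞ :=
  ∫⁻ z, ENNReal.ofReal (dist z.1 z.2 ^ p) ∂π

/-- The Wasserstein distance `W_p(μ,ν) = (inf_π ∫ |x-y|^p dπ)^{1/p}`. -/
def Wp (p : ℝ) (μ ν : Measure E) : ℝ :=
  ((sInf (Wcost p '' {π | IsPlan π μ ν})) ^ (1 / p)).toReal

/-- The set of admissible values `a|μ-μ̃| + a|ν-ν̃| + b W_p(μ̃,ν̃)` over all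
`μ̃, ν̃ ∈ M^p` with `|μ̃| = |ν̃|`. -/
def gwSet (a b p : ℝ) (μ ν : Measure E) : Set ℝ :=
  { r | ∃ μ' ν' : Measure E, IsFiniteMeasure μ' ∧ IsFiniteMeasure ν' ∧
      FinMom p μ' ∧ FinMom p ν' ∧ μ' Set.univ = ν' Set.univ ∧
      r = a * tvDist μ μ' + a * tvDist ν ν' + b * Wp p μ' ν' }

/-- The generalized Wasserstein distance `W^{a,b}_p`. -/
def GW (a b p : ℝ) (μ ν : Measure E) : ℝ := sInf (gwSet a b p μ ν)

/-- The support of a measure: the set of points all of whose open neighbourhoods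
have positive measure. -/
def msupp (μ : Measure E) : Set E := {x : E | ∀ U : Set E, IsOpen U → x ∈ U → μ U ≠ 0}

/-- Weak convergence of a sequence of measures: convergence of integrals of all
bounded continuous functions. -/
def WeakConv {F : Type*} [MeasurableSpace F] [TopologicalSpace F]
    (μs : ℕ → Measure F) (μ : Measure F) : Prop :=
  ∀ f : F → ℝ, Continuous f → (∃ C : ℝ, ∀ x, |f x| ≤ C) →
    Tendsto (fun n => ∫ x, f x ∂(μs n)) atTop (𝓝 (∫ x, f x ∂μ))

/-- A family of measures is tight if for every `ε > 0` there is a compact set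
whose complement has measure less than `ε` for all members of the family. -/
def Tight (F : Set (Measure E)) : Prop :=
  ∀ ε : ℝ, 0 < ε → ∃ K : Set E, IsCompact K ∧ ∀ μ ∈ F, μ Kᶜ < ENNReal.ofReal ε

end

noncomputable section

/-- `μ ∈ M_0^{ac}`: a finite measure, absolutely continuous with respect to the
Lebesgue measure, with bounded support. -/
def M0ac {d : ℕ} (μ : MeasureTheory.Measure (Euc d)) : Prop :=
  MeasureTheory.IsFiniteMeasure μ ∧ μ ≪ MeasureTheory.volume ∧ Bornology.IsBounded (msupp μ)

/-- `Φ` is the flow of the vector field `v`: `Φ 0 = id` and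
`∂_t Φ_t(x) = v(Φ_t(x))`. -/
def IsFlow {d : ℕ} (v : Euc d → Euc d) (Φ : ℝ → Euc d → Euc d) : Prop :=
  (∀ x, Φ 0 x = x) ∧ ∀ x t, HasDerivAt (fun s => Φ s x) (v (Φ t x)) t

end


section Aux
open Set

-- ===== measure subtraction =====
lemma measure_le_sub_add {α : Type*} [MeasurableSpace α] (μ ν : Measure α)
    [IsFiniteMeasure μ] [IsFiniteMeasure ν] : μ ≤ (μ - ν) + ν := by
  obtain ⟨s, hs, h1, h2⟩ := hahn_decomposition (μ := μ) (ν := ν)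
  have hle : ν.restrict s ≤ μ.restrict s := by
    refine Measure.le_iff.2 fun t ht => ?_
    rw [Measure.restrict_apply ht, Measure.restrict_apply ht]
    exact h1 _ (ht.inter hs) inter_subset_right
  set ρ : Measure α := μ.restrict s - ν.restrict s with hρ
  have hρle : ρ ≤ μ - ν := by
    refine le_sInf fun τ hτ => Measure.le_iff.2 fun t ht => ?_
    have hρt : ρ t = μ (t ∩ s) - ν (t ∩ s) := by
      rw [hρ, Measure.sub_apply ht hle, Measure.restrict_apply ht, Measure.restrict_apply ht]
    rw [hρt]
    refine tsub_le_iff_right.2 ?_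
    calc μ (t ∩ s) ≤ (τ + ν) (t ∩ s) := hτ (t ∩ s)
      _ = τ (t ∩ s) + ν (t ∩ s) := rfl
      _ ≤ τ t + ν (t ∩ s) := add_le_add_left (measure_mono inter_subset_left) _
  refine Measure.le_iff.2 fun t ht => ?_
  have h3 : μ t = μ (t ∩ s) + μ (t \ s) := (measure_inter_add_diff t hs).symm
  have h4 : μ (t \ s) ≤ ν (t \ s) := h2 _ (ht.diff hs) (fun x hx => hx.2)
  have h5 : μ (t ∩ s) ≤ ρ (t ∩ s) + ν (t ∩ s) := by
    have h6 : ρ (t ∩ s) = μ (t ∩ s) - ν (t ∩ s) := by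
      rw [hρ, Measure.sub_apply (ht.inter hs) hle, Measure.restrict_apply (ht.inter hs),
        Measure.restrict_apply (ht.inter hs), inter_assoc, inter_self]
    rw [h6, tsub_add_cancel_of_le (h1 _ (ht.inter hs) inter_subset_right)]
  calc μ t = μ (t ∩ s) + μ (t \ s) := h3
    _ ≤ (ρ (t ∩ s) + ν (t ∩ s)) + ν (t \ s) := add_le_add h5 h4
    _ = ρ (t ∩ s) + ν t := by rw [add_assoc, measure_inter_add_diff t hs]
    _ ≤ (μ - ν) t + ν t :=
      add_le_add_left (le_trans (measure_mono inter_subset_left) (hρle t)) _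
    _ = ((μ - ν) + ν) t := rfl

variable {α : Type*} [MeasurableSpace α] (μ ν : Measure α) [IsFiniteMeasure μ] [IsFiniteMeasure ν]

lemma ofReal_tvDist : ENNReal.ofReal (tvDist μ ν) = (μ - ν) Set.univ + (ν - μ) Set.univ := by
  refine ENNReal.ofReal_toReal ?_
  have h1 : (μ - ν) Set.univ ≤ μ Set.univ := Measure.sub_le _
  have h2 : (ν - μ) Set.univ ≤ ν Set.univ := Measure.sub_le _
  exact ne_top_of_le_ne_top (by finiteness) (add_le_add h1 h2)

lemma meas_le_add_tvDist (A : Set α) :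
    μ A ≤ ν A + ENNReal.ofReal (tvDist μ ν) := by
  calc μ A ≤ ((μ - ν) + ν) A := measure_le_sub_add μ ν A
    _ = (μ - ν) A + ν A := rfl
    _ ≤ ((μ - ν) Set.univ + (ν - μ) Set.univ) + ν A := by
        gcongr
        exact le_add_of_le_of_nonneg (measure_mono (subset_univ A)) zero_le
    _ = ν A + ENNReal.ofReal (tvDist μ ν) := by rw [ofReal_tvDist]; ring

lemma tvDist_nonneg : 0 ≤ tvDist μ ν := ENNReal.toReal_nonneg

lemma integral_sub_le_mul_sub_univ (f : α → ℝ) (hm : Measurable f) (C : ℝ) (hC0 : 0 ≤ C)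
    (h0 : ∀ x, 0 ≤ f x) (hC : ∀ x, f x ≤ C) :
    ∫ x, f x ∂μ - ∫ x, f x ∂ν ≤ C * ((μ - ν) Set.univ).toReal := by
  have hle := measure_le_sub_add μ ν
  have key : ∀ (τ : Measure α), ∫ x, f x ∂τ = (∫⁻ x, ENNReal.ofReal (f x) ∂τ).toReal :=
    fun τ => integral_eq_lintegral_of_nonneg_ae (Filter.Eventually.of_forall h0)
      hm.aestronglyMeasurable
  have hbound : ∀ (τ : Measure α), ∫⁻ x, ENNReal.ofReal (f x) ∂τ
      ≤ ENNReal.ofReal C * τ Set.univ := fun τ => by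
    calc ∫⁻ x, ENNReal.ofReal (f x) ∂τ ≤ ∫⁻ _, ENNReal.ofReal C ∂τ :=
          lintegral_mono fun x => ENNReal.ofReal_le_ofReal (hC x)
      _ = ENNReal.ofReal C * τ Set.univ := lintegral_const _
  have hfin : ∀ (τ : Measure α), τ Set.univ ≠ ⊤ →
      ∫⁻ x, ENNReal.ofReal (f x) ∂τ ≠ ⊤ := fun τ hτ =>
    ne_top_of_le_ne_top (by exact ENNReal.mul_ne_top ENNReal.ofReal_ne_top hτ) (hbound τ)
  have hsubfin : (μ - ν) Set.univ ≠ ⊤ :=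
    ne_top_of_le_ne_top (by finiteness) (Measure.sub_le (s := Set.univ))
  have step : ∫⁻ x, ENNReal.ofReal (f x) ∂μ ≤
      ∫⁻ x, ENNReal.ofReal (f x) ∂ν + ∫⁻ x, ENNReal.ofReal (f x) ∂(μ - ν) := by
    calc ∫⁻ x, ENNReal.ofReal (f x) ∂μ ≤ ∫⁻ x, ENNReal.ofReal (f x) ∂((μ - ν) + ν) :=
          lintegral_mono' hle le_rfl
      _ = ∫⁻ x, ENNReal.ofReal (f x) ∂(μ - ν) + ∫⁻ x, ENNReal.ofReal (f x) ∂ν :=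
          lintegral_add_measure _ _ _
      _ = _ := by ring
  rw [key μ, key ν]
  rw [sub_le_iff_le_add]
  calc (∫⁻ x, ENNReal.ofReal (f x) ∂μ).toReal
      ≤ (∫⁻ x, ENNReal.ofReal (f x) ∂ν + ∫⁻ x, ENNReal.ofReal (f x) ∂(μ - ν)).toReal := by
        refine ENNReal.toReal_mono ?_ step
        exact ENNReal.add_ne_top.2 ⟨hfin ν (by finiteness), hfin (μ - ν) hsubfin⟩
    _ = (∫⁻ x, ENNReal.ofReal (f x) ∂ν).toReal + (∫⁻ x, ENNReal.ofReal (f x) ∂(μ - ν)).toReal :=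
        ENNReal.toReal_add (hfin ν (by finiteness)) (hfin (μ - ν) hsubfin)
    _ ≤ (∫⁻ x, ENNReal.ofReal (f x) ∂ν).toReal + C * ((μ - ν) Set.univ).toReal := by
        gcongr
        calc (∫⁻ x, ENNReal.ofReal (f x) ∂(μ - ν)).toReal
            ≤ (ENNReal.ofReal C * (μ - ν) Set.univ).toReal := by
              refine ENNReal.toReal_mono ?_ (hbound _)
              exact ENNReal.mul_ne_top ENNReal.ofReal_ne_top hsubfin
          _ = C * ((μ - ν) Set.univ).toReal := by
              rw [ENNReal.toReal_mul, ENNReal.toReal_ofReal hC0]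
    _ = _ := by ring

lemma tvDist_eq_add : tvDist μ ν = ((μ - ν) Set.univ).toReal + ((ν - μ) Set.univ).toReal := by
  have h1 : (μ - ν) Set.univ ≠ ⊤ := ne_top_of_le_ne_top (by finiteness) (Measure.sub_le _)
  have h2 : (ν - μ) Set.univ ≠ ⊤ := ne_top_of_le_ne_top (by finiteness) (Measure.sub_le _)
  exact ENNReal.toReal_add h1 h2

lemma abs_integral_sub_le_tvDist (f : α → ℝ) (hm : Measurable f) (C : ℝ) (hC0 : 0 ≤ C)
    (hC : ∀ x, |f x| ≤ C) :
    |∫ x, f x ∂μ - ∫ x, f x ∂ν| ≤ C * tvDist μ ν := by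
  have hle1 := measure_le_sub_add μ ν
  have hle2 := measure_le_sub_add ν μ
  set g := fun x => max (f x) 0 with hgdef
  set h := fun x => max (-f x) 0 with hhdef
  have hg : Measurable g := hm.max measurable_const
  have hh : Measurable h := hm.neg.max measurable_const
  have hg0 : ∀ x, 0 ≤ g x := fun x => le_max_right _ _
  have hh0 : ∀ x, 0 ≤ h x := fun x => le_max_right _ _
  have hgC : ∀ x, g x ≤ C := fun x => max_le (le_trans (le_abs_self _) (hC x)) hC0
  have hhC : ∀ x, h x ≤ C := fun x => max_le (le_trans (neg_le_abs _) (hC x)) hC0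
  have hint : ∀ (τ : Measure α) (k : α → ℝ), Measurable k → (∀ x, |k x| ≤ C) →
      IsFiniteMeasure τ → Integrable k τ := fun τ k hk hkC _ =>
    Integrable.mono' (integrable_const C) hk.aestronglyMeasurable
      (Filter.Eventually.of_forall fun x => by simpa using hkC x)
  have habs : ∀ x, |g x| ≤ C := fun x => by rw [abs_of_nonneg (hg0 x)]; exact hgC x
  have habs' : ∀ x, |h x| ≤ C := fun x => by rw [abs_of_nonneg (hh0 x)]; exact hhC x
  have hfgh : ∀ (τ : Measure α), IsFiniteMeasure τ →
      ∫ x, f x ∂τ = ∫ x, g x ∂τ - ∫ x, h x ∂τ := by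
    intro τ hτ
    rw [← integral_sub (hint τ g hg habs hτ) (hint τ h hh habs' hτ)]
    congr 1; funext x
    simp only [hgdef, hhdef]
    exact (max_zero_sub_max_neg_zero_eq_self (f x)).symm
  rw [hfgh μ ‹_›, hfgh ν ‹_›, tvDist_eq_add]
  have b1 := integral_sub_le_mul_sub_univ μ ν g hg C hC0 hg0 hgC
  have b2 := integral_sub_le_mul_sub_univ ν μ g hg C hC0 hg0 hgC
  have b3 := integral_sub_le_mul_sub_univ μ ν h hh C hC0 hh0 hhC
  have b4 := integral_sub_le_mul_sub_univ ν μ h hh C hC0 hh0 hhC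
  rw [abs_le]
  constructor
  · nlinarith [b2, b3]
  · nlinarith [b1, b4]

end Aux


section Wass

lemma rpow_dist_bound {E : Type*} [NormedAddCommGroup E] (p : ℝ) (hp : 0 ≤ p) (x y : E) :
    dist x y ^ p ≤ 2 ^ p * (‖x‖ ^ p + ‖y‖ ^ p) := by
  have h1 : dist x y ≤ 2 * max ‖x‖ ‖y‖ := by
    rw [dist_eq_norm]
    calc ‖x - y‖ ≤ ‖x‖ + ‖y‖ := norm_sub_le _ _
      _ ≤ 2 * max ‖x‖ ‖y‖ := by
          rw [two_mul]; exact add_le_add (le_max_left _ _) (le_max_right _ _)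
  calc dist x y ^ p ≤ (2 * max ‖x‖ ‖y‖) ^ p :=
        Real.rpow_le_rpow dist_nonneg h1 hp
    _ = 2 ^ p * (max ‖x‖ ‖y‖) ^ p := Real.mul_rpow (by norm_num) (le_max_of_le_left (norm_nonneg _))
    _ ≤ 2 ^ p * (‖x‖ ^ p + ‖y‖ ^ p) := by
        gcongr
        rcases max_cases ‖x‖ ‖y‖ with ⟨h, _⟩ | ⟨h, _⟩ <;> rw [h]
        · exact le_add_of_nonneg_right (Real.rpow_nonneg (norm_nonneg _) _)
        · exact le_add_of_nonneg_left (Real.rpow_nonneg (norm_nonneg _) _)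

lemma cost_integrand_measurable {d : ℕ} (p : ℝ) (hp : 0 ≤ p) :
    Measurable (fun z : Euc d × Euc d => ENNReal.ofReal (dist z.1 z.2 ^ p)) := by
  have h1 : Continuous (fun z : Euc d × Euc d => dist z.1 z.2) :=
    continuous_fst.dist continuous_snd
  have h2 : Continuous (fun z : Euc d × Euc d => dist z.1 z.2 ^ p) :=
    h1.rpow_const (fun z => Or.inr hp)
  exact (ENNReal.continuous_ofReal.comp h2).measurable

lemma norm_rpow_measurable {d : ℕ} (p : ℝ) (hp : 0 ≤ p) :
    Measurable (fun x : Euc d => ENNReal.ofReal (‖x‖ ^ p)) := by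
  have h2 : Continuous (fun x : Euc d => ‖x‖ ^ p) :=
    continuous_norm.rpow_const (fun z => Or.inr hp)
  exact (ENNReal.continuous_ofReal.comp h2).measurable

lemma exists_plan_cost_lt {d : ℕ} (p : ℝ) (hp : 1 ≤ p) (μ' ν' : Measure (Euc d))
    [IsFiniteMeasure μ'] [IsFiniteMeasure ν'] (hmom1 : FinMom p μ') (hmom2 : FinMom p ν')
    (hmass : μ' Set.univ = ν' Set.univ) {ε : ℝ} (hε : 0 < ε) (hW : Wp p μ' ν' < ε) :
    ∃ π : Measure (Euc d × Euc d), IsPlan π μ' ν' ∧ Wcost p π < ENNReal.ofReal (ε ^ p) := by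
  have hp0 : 0 < p := lt_of_lt_of_le one_pos hp
  -- step 1: a plan with finite cost exists
  obtain ⟨π₀, hπ₀, hcost₀⟩ : ∃ π₀ : Measure (Euc d × Euc d), IsPlan π₀ μ' ν' ∧ Wcost p π₀ ≠ ⊤ := by
    by_cases hm : μ' Set.univ = 0
    · refine ⟨0, ⟨?_, ?_⟩, ?_⟩
      · rw [Measure.map_zero]
        exact (Measure.measure_univ_eq_zero.1 hm).symm
      · rw [Measure.map_zero]
        exact (Measure.measure_univ_eq_zero.1 (hmass ▸ hm)).symm
      · simp [Wcost]
    · set m := μ' Set.univ with hmdef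
      have hmtop : m ≠ ⊤ := by finiteness
      refine ⟨m⁻¹ • (μ'.prod ν'), ⟨?_, ?_⟩, ?_⟩
      · rw [Measure.map_smul, Measure.map_fst_prod, ← hmass, smul_smul,
          ENNReal.inv_mul_cancel hm hmtop, one_smul]
      · rw [Measure.map_smul, Measure.map_snd_prod, smul_smul,
          ENNReal.inv_mul_cancel hm hmtop, one_smul]
      · have hparts : Wcost p (μ'.prod ν') ≠ ⊤ := by
          have hmeas1 : Measurable (fun z : Euc d × Euc d => ENNReal.ofReal (‖z.1‖ ^ p)) :=
            (norm_rpow_measurable p hp0.le).comp measurable_fst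
          have hmeas2 : Measurable (fun z : Euc d × Euc d => ENNReal.ofReal (‖z.2‖ ^ p)) :=
            (norm_rpow_measurable p hp0.le).comp measurable_snd
          have hb : Wcost p (μ'.prod ν') ≤ ENNReal.ofReal (2 ^ p) *
              ((∫⁻ z : Euc d × Euc d, ENNReal.ofReal (‖z.1‖ ^ p) ∂(μ'.prod ν')) +
               (∫⁻ z : Euc d × Euc d, ENNReal.ofReal (‖z.2‖ ^ p) ∂(μ'.prod ν'))) := by
            calc Wcost p (μ'.prod ν')
                ≤ ∫⁻ z : Euc d × Euc d, ENNReal.ofReal (2 ^ p) *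
                    (ENNReal.ofReal (‖z.1‖ ^ p) + ENNReal.ofReal (‖z.2‖ ^ p)) ∂(μ'.prod ν') := by
                  refine lintegral_mono fun z => ?_
                  calc ENNReal.ofReal (dist z.1 z.2 ^ p)
                      ≤ ENNReal.ofReal (2 ^ p * (‖z.1‖ ^ p + ‖z.2‖ ^ p)) :=
                        ENNReal.ofReal_le_ofReal (rpow_dist_bound p hp0.le z.1 z.2)
                    _ = ENNReal.ofReal (2 ^ p) * ENNReal.ofReal (‖z.1‖ ^ p + ‖z.2‖ ^ p) :=
                        ENNReal.ofReal_mul (Real.rpow_nonneg (by norm_num) _)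
                    _ ≤ ENNReal.ofReal (2 ^ p) *
                        (ENNReal.ofReal (‖z.1‖ ^ p) + ENNReal.ofReal (‖z.2‖ ^ p)) := by
                        gcongr
                        exact ENNReal.ofReal_add_le
              _ = ENNReal.ofReal (2 ^ p) * ∫⁻ z : Euc d × Euc d,
                    (ENNReal.ofReal (‖z.1‖ ^ p) + ENNReal.ofReal (‖z.2‖ ^ p)) ∂(μ'.prod ν') :=
                  lintegral_const_mul _ (hmeas1.add hmeas2)
              _ = _ := by rw [lintegral_add_left hmeas1]
          have hfst : (∫⁻ z : Euc d × Euc d, ENNReal.ofReal (‖z.1‖ ^ p) ∂(μ'.prod ν'))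
              = ν' Set.univ * ∫⁻ x, ENNReal.ofReal (‖x‖ ^ p) ∂μ' := by
            have h := lintegral_map (μ := μ'.prod ν') (norm_rpow_measurable (d := d) p hp0.le)
              measurable_fst
            rw [Measure.map_fst_prod, lintegral_smul_measure] at h
            exact h.symm
          have hsnd : (∫⁻ z : Euc d × Euc d, ENNReal.ofReal (‖z.2‖ ^ p) ∂(μ'.prod ν'))
              = μ' Set.univ * ∫⁻ x, ENNReal.ofReal (‖x‖ ^ p) ∂ν' := by
            have h := lintegral_map (μ := μ'.prod ν') (norm_rpow_measurable (d := d) p hp0.le)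
              measurable_snd
            rw [Measure.map_snd_prod, lintegral_smul_measure] at h
            exact h.symm
          refine ne_top_of_le_ne_top ?_ hb
          rw [hfst, hsnd]
          exact ENNReal.mul_ne_top ENNReal.ofReal_ne_top (ENNReal.add_ne_top.2
            ⟨ENNReal.mul_ne_top (by finiteness) hmom1.ne,
             ENNReal.mul_ne_top (by finiteness) hmom2.ne⟩)
        unfold Wcost at hparts ⊢
        rw [lintegral_smul_measure]
        exact ENNReal.mul_ne_top (ENNReal.inv_ne_top.2 hm) hparts
  -- step 2: sInf < ofReal (ε ^ p)
  set S := Wcost p '' {π | IsPlan π μ' ν'} with hS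
  have hmem : Wcost p π₀ ∈ S := ⟨π₀, hπ₀, rfl⟩
  have hsInf_ne_top : sInf S ≠ ⊤ := ne_top_of_le_ne_top hcost₀ (sInf_le hmem)
  have hrpow_ne_top : (sInf S) ^ (1 / p) ≠ ⊤ :=
    (ENNReal.rpow_lt_top_of_nonneg (by positivity) hsInf_ne_top).ne
  have hlt : (sInf S) ^ (1 / p) < ENNReal.ofReal ε := by
    rw [ENNReal.lt_ofReal_iff_toReal_lt hrpow_ne_top]
    exact hW
  have hsInf_lt : sInf S < ENNReal.ofReal (ε ^ p) := by
    have h := ENNReal.rpow_lt_rpow hlt hp0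
    rwa [← ENNReal.rpow_mul, one_div_mul_cancel hp0.ne', ENNReal.rpow_one,
      ENNReal.ofReal_rpow_of_pos hε] at h
  obtain ⟨c, hcS, hc⟩ := sInf_lt_iff.1 hsInf_lt
  obtain ⟨π, hπ, rfl⟩ := hcS
  exact ⟨π, hπ, hc⟩


/-- Markov / Chebyshev for the transport cost. -/
lemma plan_tail_le {d : ℕ} (p : ℝ) (hp : 0 < p) (π : Measure (Euc d × Euc d))
    {δ : ℝ} (hδ : 0 < δ) :
    π {z : Euc d × Euc d | δ ≤ dist z.1 z.2} ≤ Wcost p π / ENNReal.ofReal (δ ^ p) := by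
  have hne : ENNReal.ofReal (δ ^ p) ≠ 0 := by
    simp only [ne_eq, ENNReal.ofReal_eq_zero, not_le]
    positivity
  rw [ENNReal.le_div_iff_mul_le (Or.inl hne) (Or.inl ENNReal.ofReal_ne_top), mul_comm]
  calc ENNReal.ofReal (δ ^ p) * π {z : Euc d × Euc d | δ ≤ dist z.1 z.2}
      ≤ ENNReal.ofReal (δ ^ p) *
        π {z : Euc d × Euc d | ENNReal.ofReal (δ ^ p) ≤ ENNReal.ofReal (dist z.1 z.2 ^ p)} := by
        refine mul_le_mul_right (measure_mono fun z hz => ?_) _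
        exact ENNReal.ofReal_le_ofReal (Real.rpow_le_rpow hδ.le hz hp.le)
    _ ≤ Wcost p π := mul_meas_ge_le_lintegral (cost_integrand_measurable p hp.le) _

/-- Tail bound for the first marginal of a plan. -/
lemma marginal_tail_le {d : ℕ} (p : ℝ) (hp : 0 < p) (π : Measure (Euc d × Euc d))
    (μ' ν' : Measure (Euc d)) (hπ : IsPlan π μ' ν') (r : ℝ) :
    μ' (Metric.closedBall 0 (r + 1))ᶜ ≤
      ν' (Metric.closedBall 0 r)ᶜ + Wcost p π / ENNReal.ofReal (1 ^ p) := by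
  have hmb : MeasurableSet (Metric.closedBall (0 : Euc d) (r + 1))ᶜ :=
    Metric.isClosed_closedBall.measurableSet.compl
  have h1 : μ' (Metric.closedBall 0 (r + 1))ᶜ
      = π (Prod.fst ⁻¹' (Metric.closedBall 0 (r + 1))ᶜ) := by
    rw [← hπ.1, Measure.map_apply measurable_fst hmb]
  have hsub : Prod.fst ⁻¹' (Metric.closedBall (0 : Euc d) (r + 1))ᶜ ⊆
      (Prod.snd ⁻¹' (Metric.closedBall (0 : Euc d) r)ᶜ) ∪
      {z : Euc d × Euc d | (1 : ℝ) ≤ dist z.1 z.2} := by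
    intro z hz
    by_cases h2 : z.2 ∈ Metric.closedBall (0 : Euc d) r
    · refine Or.inr ?_
      simp only [Set.mem_preimage, Set.mem_compl_iff, Metric.mem_closedBall,
        dist_zero_right, not_le] at hz h2 ⊢
      have hkey : ‖z.1‖ - ‖z.2‖ ≤ dist z.1 z.2 := by
        rw [dist_eq_norm]; exact (le_abs_self _).trans (abs_norm_sub_norm_le _ _)
      simp only [Set.mem_setOf_eq]
      linarith [hkey]
    · exact Or.inl h2
  calc μ' (Metric.closedBall 0 (r + 1))ᶜ
      ≤ π ((Prod.snd ⁻¹' (Metric.closedBall (0 : Euc d) r)ᶜ) ∪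
          {z : Euc d × Euc d | (1 : ℝ) ≤ dist z.1 z.2}) := by rw [h1]; exact measure_mono hsub
    _ ≤ π (Prod.snd ⁻¹' (Metric.closedBall (0 : Euc d) r)ᶜ) +
        π {z : Euc d × Euc d | (1 : ℝ) ≤ dist z.1 z.2} := measure_union_le _ _
    _ ≤ ν' (Metric.closedBall 0 r)ᶜ + Wcost p π / ENNReal.ofReal (1 ^ p) := by
        gcongr
        · rw [← hπ.2, Measure.map_apply measurable_snd
            Metric.isClosed_closedBall.measurableSet.compl]
        · exact plan_tail_le p hp π one_pos

/-- Every finite measure on `Euc d` has small tails. -/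
lemma exists_radius_tail_lt {d : ℕ} (lam : Measure (Euc d)) [IsFiniteMeasure lam]
    {ε : ℝ} (hε : 0 < ε) :
    ∃ r : ℝ, 0 ≤ r ∧ lam (Metric.closedBall 0 r)ᶜ < ENNReal.ofReal ε := by
  have htend : Tendsto (fun n : ℕ => lam (Metric.closedBall 0 (n : ℝ))ᶜ) atTop
      (𝓝 (lam (⋂ n : ℕ, (Metric.closedBall 0 (n : ℝ))ᶜ))) := by
    refine tendsto_measure_iInter_atTop (fun n => ?_) (fun m n hmn => ?_) ⟨0, by finiteness⟩
    · exact Metric.isClosed_closedBall.measurableSet.compl.nullMeasurableSet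
    · exact Set.compl_subset_compl.2 (Metric.closedBall_subset_closedBall (by exact_mod_cast hmn))
  have hempty : (⋂ n : ℕ, (Metric.closedBall (0 : Euc d) (n : ℝ))ᶜ) = ∅ := by
    ext x
    simp only [Set.mem_iInter, Set.mem_compl_iff, Metric.mem_closedBall, dist_zero_right,
      not_le, Set.mem_empty_iff_false, iff_false, not_forall, not_lt]
    obtain ⟨n, hn⟩ := exists_nat_ge ‖x‖
    exact ⟨n, hn⟩
  rw [hempty, measure_empty] at htend
  have := htend.eventually_lt_const (by simp [hε] : (0 : ℝ≥0∞) < ENNReal.ofReal ε)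
  obtain ⟨n, hn⟩ := this.exists
  exact ⟨n, Nat.cast_nonneg n, hn⟩


lemma tvDist_comm {α : Type*} [MeasurableSpace α] (μ ν : Measure α) :
    tvDist μ ν = tvDist ν μ := by
  unfold tvDist; rw [add_comm]

lemma gw_extract {d : ℕ} (a b p : ℝ) (hp : 1 ≤ p) (ha : 0 < a) (hb : 0 < b)
    (μs : ℕ → Measure (Euc d)) (μ : Measure (Euc d))
    (hfin : ∀ n, IsFiniteMeasure (μs n)) [IsFiniteMeasure μ]
    (hgw : Tendsto (fun n => GW a b p (μs n) μ) atTop (𝓝 0))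
    {ε : ℝ} (hε : 0 < ε) :
    ∀ᶠ n in atTop, ∃ (μ' ν' : Measure (Euc d)) (π : Measure (Euc d × Euc d)),
      IsFiniteMeasure μ' ∧ IsFiniteMeasure ν' ∧ μ' Set.univ = ν' Set.univ ∧
      IsPlan π μ' ν' ∧ tvDist (μs n) μ' < ε ∧ tvDist μ ν' < ε ∧
      Wcost p π < ENNReal.ofReal (ε ^ p) := by
  have hc : (0 : ℝ) < min (a * ε) (b * ε) := lt_min (by positivity) (by positivity)
  filter_upwards [hgw.eventually_lt_const hc] with n hn
  have hne : (gwSet a b p (μs n) μ).Nonempty := by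
    refine ⟨_, 0, 0, inferInstance, inferInstance, ?_, ?_, by simp, rfl⟩ <;>
      simp [FinMom]
  obtain ⟨r, hr, hrc⟩ := exists_lt_of_csInf_lt hne hn
  obtain ⟨μ', ν', hμ'fin, hν'fin, hmom1, hmom2, hmass, hreq⟩ := hr
  haveI := hμ'fin; haveI := hν'fin; haveI := hfin n
  have ht1 : 0 ≤ tvDist (μs n) μ' := ENNReal.toReal_nonneg
  have ht2 : 0 ≤ tvDist μ ν' := ENNReal.toReal_nonneg
  have hw : 0 ≤ Wp p μ' ν' := ENNReal.toReal_nonneg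
  subst hreq
  have h1 : tvDist (μs n) μ' < ε := by
    have : a * tvDist (μs n) μ' < a * ε :=
      lt_of_le_of_lt (by nlinarith [mul_nonneg hb.le hw]) (lt_of_lt_of_le hrc (min_le_left _ _))
    exact lt_of_mul_lt_mul_left this ha.le
  have h2 : tvDist μ ν' < ε := by
    have : a * tvDist μ ν' < a * ε :=
      lt_of_le_of_lt (by nlinarith [mul_nonneg hb.le hw]) (lt_of_lt_of_le hrc (min_le_left _ _))
    exact lt_of_mul_lt_mul_left this ha.le
  have h3 : Wp p μ' ν' < ε := by
    have : b * Wp p μ' ν' < b * ε :=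
      lt_of_le_of_lt (by nlinarith) (lt_of_lt_of_le hrc (min_le_right _ _))
    exact lt_of_mul_lt_mul_left this hb.le
  obtain ⟨π, hπ, hcost⟩ := exists_plan_cost_lt p hp μ' ν' hmom1 hmom2 hmass hε h3
  exact ⟨μ', ν', π, inferInstance, inferInstance, hmass, hπ, h1, h2, hcost⟩

end Wass

set_option maxHeartbeats 1000000 in
theorem weakConv_tight_of_gw_tendsto_zero {d : ℕ} (hd : 1 ≤ d) (a b p : ℝ) (hp : 1 ≤ p) (ha : 0 < a) (hb : 0 < b)
    (μs : ℕ → Measure (Euc d)) (μ : Measure (Euc d))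
    (hfin : ∀ n, IsFiniteMeasure (μs n)) [IsFiniteMeasure μ]
    (hgw : Tendsto (fun n => GW a b p (μs n) μ) atTop (𝓝 0)) :
    Tight (Set.range μs) ∧ WeakConv μs μ := by
  have hp0 : 0 < p := lt_of_lt_of_le one_pos hp
  constructor
  · -- Tightness
    intro ε hε
    set ε₁ : ℝ := min 1 (ε / 8) with hε₁def
    have hε₁ : 0 < ε₁ := lt_min one_pos (by positivity)
    have hε₁le : ε₁ ≤ ε / 8 := min_le_right _ _
    have hε₁1 : ε₁ ≤ 1 := min_le_left _ _
    obtain ⟨r₀, hr₀0, hr₀⟩ := exists_radius_tail_lt μ (show (0:ℝ) < ε / 8 by positivity)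
    obtain ⟨N, hN⟩ := Filter.eventually_atTop.1
      (gw_extract a b p hp ha hb μs μ hfin hgw hε₁)
    have h2 : ∀ n, ∃ r : ℝ, 0 ≤ r ∧ μs n (Metric.closedBall 0 r)ᶜ < ENNReal.ofReal ε := by
      intro n
      haveI := hfin n
      exact exists_radius_tail_lt (μs n) hε
    choose rr hrr0 hrr using h2
    set g : ℕ → ℝ := fun n => if n < N then rr n else r₀ + 1 with hgdef
    set R : ℝ := (Finset.range (N + 1)).sup' (by simp) g with hRdef
    have hgR : ∀ n ∈ Finset.range (N + 1), g n ≤ R := fun n hn => Finset.le_sup' g hn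
    have hRr₀ : r₀ + 1 ≤ R := by
      have := hgR N (by simp)
      simpa [hgdef] using this
    refine ⟨Metric.closedBall 0 R, isCompact_closedBall _ _, ?_⟩
    rintro lam ⟨n, rfl⟩
    haveI := hfin n
    rcases lt_or_ge n N with hnN | hnN
    · -- small n : use its own radius
      have hrn : rr n ≤ R := by
        have := hgR n (Finset.mem_range.2 (Nat.lt_succ_of_lt hnN))
        simpa [hgdef, hnN] using this
      calc μs n (Metric.closedBall 0 R)ᶜ
          ≤ μs n (Metric.closedBall 0 (rr n))ᶜ :=
            measure_mono (Set.compl_subset_compl.2 (Metric.closedBall_subset_closedBall hrn))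
        _ < ENNReal.ofReal ε := hrr n
    · -- large n : use the transport plan
      obtain ⟨μ', ν', π, hμ'fin, hν'fin, hmass, hplan, htv1, htv2, hcost⟩ := hN n hnN
      haveI := hμ'fin; haveI := hν'fin
      have hcost' : Wcost p π ≤ ENNReal.ofReal ε₁ := by
        refine le_trans hcost.le (ENNReal.ofReal_le_ofReal ?_)
        calc ε₁ ^ p ≤ ε₁ ^ (1 : ℝ) := Real.rpow_le_rpow_of_exponent_ge hε₁ hε₁1 hp
          _ = ε₁ := Real.rpow_one _
      have step1 : μs n (Metric.closedBall 0 R)ᶜ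
          ≤ μ' (Metric.closedBall 0 (r₀ + 1))ᶜ + ENNReal.ofReal ε₁ := by
        calc μs n (Metric.closedBall 0 R)ᶜ
            ≤ μs n (Metric.closedBall 0 (r₀ + 1))ᶜ :=
              measure_mono (Set.compl_subset_compl.2 (Metric.closedBall_subset_closedBall hRr₀))
          _ ≤ μ' (Metric.closedBall 0 (r₀ + 1))ᶜ + ENNReal.ofReal (tvDist (μs n) μ') :=
              meas_le_add_tvDist (μs n) μ' _
          _ ≤ _ := add_le_add_right (ENNReal.ofReal_le_ofReal htv1.le) _
      have step2 : μ' (Metric.closedBall 0 (r₀ + 1))ᶜ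
          ≤ ν' (Metric.closedBall 0 r₀)ᶜ + ENNReal.ofReal ε₁ := by
        refine le_trans (marginal_tail_le p hp0 π μ' ν' hplan r₀) ?_
        refine add_le_add_right ?_ _
        rw [Real.one_rpow, ENNReal.ofReal_one]
        simpa using hcost'
      have step3 : ν' (Metric.closedBall 0 r₀)ᶜ
          ≤ ENNReal.ofReal (ε / 8) + ENNReal.ofReal ε₁ := by
        calc ν' (Metric.closedBall 0 r₀)ᶜ
            ≤ μ (Metric.closedBall 0 r₀)ᶜ + ENNReal.ofReal (tvDist ν' μ) :=
              meas_le_add_tvDist ν' μ _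
          _ ≤ ENNReal.ofReal (ε / 8) + ENNReal.ofReal ε₁ := by
              refine add_le_add hr₀.le ?_
              rw [tvDist_comm]; exact ENNReal.ofReal_le_ofReal htv2.le
      calc μs n (Metric.closedBall 0 R)ᶜ
          ≤ (ENNReal.ofReal (ε / 8) + ENNReal.ofReal ε₁ + ENNReal.ofReal ε₁)
            + ENNReal.ofReal ε₁ := by
            refine le_trans step1 ?_
            refine add_le_add_left ?_ _
            exact le_trans step2 (add_le_add_left step3 _)
        _ = ENNReal.ofReal (ε / 8 + ε₁ + ε₁ + ε₁) := by
            rw [← ENNReal.ofReal_add (by positivity) hε₁.le,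
              ← ENNReal.ofReal_add (by positivity) hε₁.le,
              ← ENNReal.ofReal_add (by positivity) hε₁.le]
        _ < ENNReal.ofReal ε := by
            rw [ENNReal.ofReal_lt_ofReal_iff hε]
            linarith
  · -- Weak convergence
    intro f hf hbound
    obtain ⟨C₀, hC₀⟩ := hbound
    set C : ℝ := |C₀| + 1 with hCdef
    have hC : 0 < C := by positivity
    have hC1 : 1 ≤ C := by rw [hCdef]; linarith [abs_nonneg C₀]
    have hfC : ∀ x, |f x| ≤ C := fun x =>
      le_trans (hC₀ x) (le_trans (le_abs_self _) (by simp [hCdef]))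
    have hfm : Measurable f := hf.measurable
    rw [Metric.tendsto_atTop]
    intro ε hε
    set M : ℝ := (μ Set.univ).toReal + 1 with hMdef
    have hM1 : 1 ≤ M := by
      simp only [hMdef, le_add_iff_nonneg_left]
      exact ENNReal.toReal_nonneg
    have hM : 0 < M := lt_of_lt_of_le one_pos hM1
    set ε₃ : ℝ := ε / (8 * (M + 1)) with hε₃def
    have hε₃ : 0 < ε₃ := by positivity
    set θ : ℝ := ε / (64 * (C + 1)) with hθdef
    have hθ : 0 < θ := by positivity
    obtain ⟨r₀, hr₀0, hr₀⟩ := exists_radius_tail_lt μ hθ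
    set R : ℝ := r₀ + 1 with hRdef
    -- uniform continuity on a large ball
    have hK : IsCompact (Metric.closedBall (0 : Euc d) (R + 1)) := isCompact_closedBall _ _
    have hUC : UniformContinuousOn f (Metric.closedBall (0 : Euc d) (R + 1)) :=
      hK.uniformContinuousOn_of_continuous hf.continuousOn
    rw [Metric.uniformContinuousOn_iff] at hUC
    obtain ⟨δ₀, hδ₀, hδ₀p⟩ := hUC ε₃ hε₃
    set δ : ℝ := min δ₀ 1 with hδdef
    have hδ : 0 < δ := lt_min hδ₀ one_pos
    have hδ1 : δ ≤ 1 := min_le_right _ _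
    set m1 : ℝ := min 1 θ with hm1def
    have hm1 : 0 < m1 := lt_min one_pos hθ
    have hm11 : m1 ≤ 1 := min_le_left _ _
    have hm1θ : m1 ≤ θ := min_le_right _ _
    set ε₁ : ℝ := δ * m1 with hε₁def
    have hε₁ : 0 < ε₁ := mul_pos hδ hm1
    have hε₁1 : ε₁ ≤ 1 := by nlinarith
    have hε₁θ : ε₁ ≤ θ := by nlinarith
    have hcostkey : ε₁ ^ p ≤ θ * δ ^ p := by
      rw [hε₁def, Real.mul_rpow hδ.le hm1.le]
      have h1 : m1 ^ p ≤ m1 := by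
        calc m1 ^ p ≤ m1 ^ (1 : ℝ) := Real.rpow_le_rpow_of_exponent_ge hm1 hm11 hp
          _ = m1 := Real.rpow_one _
      have h2 : (0:ℝ) ≤ δ ^ p := Real.rpow_nonneg hδ.le _
      calc δ ^ p * m1 ^ p ≤ δ ^ p * m1 := by nlinarith
        _ ≤ δ ^ p * θ := by nlinarith
        _ = θ * δ ^ p := mul_comm _ _
    have hε₁ε₁ : ε₁ ^ p ≤ ε₁ := by
      calc ε₁ ^ p ≤ ε₁ ^ (1 : ℝ) := Real.rpow_le_rpow_of_exponent_ge hε₁ hε₁1 hp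
        _ = ε₁ := Real.rpow_one _
    obtain ⟨N, hN⟩ := Filter.eventually_atTop.1
      (gw_extract a b p hp ha hb μs μ hfin hgw hε₁)
    refine ⟨N, fun n hn => ?_⟩
    obtain ⟨μ', ν', π, hμ'fin, hν'fin, hmass, hplan, htv1, htv2, hcost⟩ := hN n hn
    haveI := hμ'fin; haveI := hν'fin; haveI := hfin n
    have hπuniv : π Set.univ = μ' Set.univ := by
      conv_rhs => rw [← hplan.1]
      rw [Measure.map_apply measurable_fst MeasurableSet.univ, Set.preimage_univ]
    haveI : IsFiniteMeasure π := ⟨by rw [hπuniv]; exact measure_lt_top μ' _⟩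
    -- mass bound
    have hmassle : (π Set.univ).toReal ≤ M := by
      rw [hπuniv, hmass]
      have h := meas_le_add_tvDist ν' μ Set.univ
      have h2 : (ν' Set.univ).toReal ≤ (μ Set.univ).toReal + tvDist ν' μ := by
        calc (ν' Set.univ).toReal
            ≤ (μ Set.univ + ENNReal.ofReal (tvDist ν' μ)).toReal :=
              ENNReal.toReal_mono (ENNReal.add_ne_top.2 ⟨by finiteness, ENNReal.ofReal_ne_top⟩) h
          _ = (μ Set.univ).toReal + tvDist ν' μ := by
              rw [ENNReal.toReal_add (by finiteness) ENNReal.ofReal_ne_top,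
                ENNReal.toReal_ofReal (tvDist_nonneg ν' μ)]
      have h3 : tvDist ν' μ < ε₁ := by rw [tvDist_comm]; exact htv2
      linarith [h2, h3, hε₁1, hMdef.le, hMdef.ge]
    -- cost bounds
    have hcost1 : Wcost p π ≤ ENNReal.ofReal ε₁ :=
      le_trans hcost.le (ENNReal.ofReal_le_ofReal hε₁ε₁)
    -- integral identities
    have hi1 : ∫ x, f x ∂μ' = ∫ z : Euc d × Euc d, f z.1 ∂π := by
      conv_lhs => rw [← hplan.1]
      rw [integral_map measurable_fst.aemeasurable hfm.aestronglyMeasurable]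
    have hi2 : ∫ x, f x ∂ν' = ∫ z : Euc d × Euc d, f z.2 ∂π := by
      conv_lhs => rw [← hplan.2]
      rw [integral_map measurable_snd.aemeasurable hfm.aestronglyMeasurable]
    have hint1 : Integrable (fun z : Euc d × Euc d => f z.1) π :=
      Integrable.mono' (integrable_const C) (hfm.comp measurable_fst).aestronglyMeasurable
        (Filter.Eventually.of_forall fun z => by simpa using hfC z.1)
    have hint2 : Integrable (fun z : Euc d × Euc d => f z.2) π :=
      Integrable.mono' (integrable_const C) (hfm.comp measurable_snd).aestronglyMeasurable
        (Filter.Eventually.of_forall fun z => by simpa using hfC z.2)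
    -- bad set
    set Bad : Set (Euc d × Euc d) :=
      (Prod.fst ⁻¹' (Metric.closedBall (0 : Euc d) R)ᶜ) ∪
        {z : Euc d × Euc d | δ ≤ dist z.1 z.2} with hBaddef
    have hBadmeas : MeasurableSet Bad := by
      refine (measurable_fst Metric.isClosed_closedBall.measurableSet.compl).union ?_
      exact (isClosed_le continuous_const (continuous_fst.dist continuous_snd)).measurableSet
    have hBad1 : π (Prod.fst ⁻¹' (Metric.closedBall (0 : Euc d) R)ᶜ) ≤
        ENNReal.ofReal θ + ENNReal.ofReal θ + ENNReal.ofReal θ := by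
      have heq : π (Prod.fst ⁻¹' (Metric.closedBall (0 : Euc d) R)ᶜ)
          = μ' (Metric.closedBall 0 R)ᶜ := by
        conv_rhs => rw [← hplan.1]
        rw [Measure.map_apply measurable_fst Metric.isClosed_closedBall.measurableSet.compl]
      rw [heq, hRdef]
      calc μ' (Metric.closedBall 0 (r₀ + 1))ᶜ
          ≤ ν' (Metric.closedBall 0 r₀)ᶜ + Wcost p π / ENNReal.ofReal (1 ^ p) :=
            marginal_tail_le p hp0 π μ' ν' hplan r₀
        _ ≤ (μ (Metric.closedBall 0 r₀)ᶜ + ENNReal.ofReal (tvDist ν' μ)) + Wcost p π := by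
            refine add_le_add (meas_le_add_tvDist ν' μ _) ?_
            rw [Real.one_rpow, ENNReal.ofReal_one]
            simp
        _ ≤ ENNReal.ofReal θ + ENNReal.ofReal θ + ENNReal.ofReal θ := by
            refine add_le_add (add_le_add hr₀.le ?_) ?_
            · refine ENNReal.ofReal_le_ofReal ?_
              rw [tvDist_comm]
              exact le_trans htv2.le hε₁θ
            · exact le_trans hcost1 (ENNReal.ofReal_le_ofReal hε₁θ)
    have hBad2 : π {z : Euc d × Euc d | δ ≤ dist z.1 z.2} ≤ ENNReal.ofReal θ := by
      refine le_trans (plan_tail_le p hp0 π hδ) ?_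
      refine ENNReal.div_le_of_le_mul ?_
      calc Wcost p π ≤ ENNReal.ofReal (ε₁ ^ p) := hcost.le
        _ ≤ ENNReal.ofReal (θ * δ ^ p) := ENNReal.ofReal_le_ofReal hcostkey
        _ = ENNReal.ofReal θ * ENNReal.ofReal (δ ^ p) := ENNReal.ofReal_mul hθ.le
    have hBad : π Bad ≤ ENNReal.ofReal (4 * θ) := by
      calc π Bad ≤ π (Prod.fst ⁻¹' (Metric.closedBall (0 : Euc d) R)ᶜ) +
            π {z : Euc d × Euc d | δ ≤ dist z.1 z.2} := measure_union_le _ _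
        _ ≤ (ENNReal.ofReal θ + ENNReal.ofReal θ + ENNReal.ofReal θ) + ENNReal.ofReal θ :=
            add_le_add hBad1 hBad2
        _ = ENNReal.ofReal (4 * θ) := by
            rw [← ENNReal.ofReal_add hθ.le hθ.le, ← ENNReal.ofReal_add (by positivity) hθ.le,
              ← ENNReal.ofReal_add (by positivity) hθ.le]
            ring_nf
    -- pointwise bound
    have hptw : ∀ z : Euc d × Euc d, ENNReal.ofReal |f z.1 - f z.2| ≤
        ENNReal.ofReal ε₃ + Bad.indicator (fun _ => ENNReal.ofReal (2 * C)) z := by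
      intro z
      by_cases hz : z ∈ Bad
      · rw [Set.indicator_of_mem hz]
        refine le_trans (ENNReal.ofReal_le_ofReal ?_) le_add_self
        calc |f z.1 - f z.2| ≤ |f z.1| + |f z.2| := abs_sub _ _
          _ ≤ 2 * C := by linarith [hfC z.1, hfC z.2]
      · rw [Set.indicator_of_notMem hz, add_zero]
        simp only [hBaddef, Set.mem_union, Set.mem_preimage, Set.mem_compl_iff,
          Set.mem_setOf_eq, not_or, not_not, not_le] at hz
        obtain ⟨hz1, hz2⟩ := hz
        have hz1' : z.1 ∈ Metric.closedBall (0 : Euc d) (R + 1) :=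
          Metric.closedBall_subset_closedBall (by linarith) hz1
        have hz2' : z.2 ∈ Metric.closedBall (0 : Euc d) (R + 1) := by
          rw [Metric.mem_closedBall] at hz1 ⊢
          have hd21 : dist z.2 z.1 ≤ δ := by rw [dist_comm]; exact hz2.le
          calc dist z.2 0 ≤ dist z.2 z.1 + dist z.1 0 := dist_triangle _ _ _
            _ ≤ δ + R := add_le_add hd21 hz1
            _ ≤ R + 1 := by linarith
        have := hδ₀p z.1 hz1' z.2 hz2' (lt_of_lt_of_le hz2 (min_le_left _ _))
        rw [Real.dist_eq] at this
        exact ENNReal.ofReal_le_ofReal this.le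
    -- the middle term
    have T2 : |∫ x, f x ∂μ' - ∫ x, f x ∂ν'| ≤ ε₃ * M + 2 * C * (4 * θ) := by
      rw [hi1, hi2, ← integral_sub hint1 hint2]
      have habs : |∫ z : Euc d × Euc d, (f z.1 - f z.2) ∂π| ≤
          ∫ z : Euc d × Euc d, |f z.1 - f z.2| ∂π := by
        simpa [Real.norm_eq_abs] using
          norm_integral_le_integral_norm (μ := π) (fun z : Euc d × Euc d => f z.1 - f z.2)
      refine le_trans habs ?_
      have heq2 : ∫ z : Euc d × Euc d, |f z.1 - f z.2| ∂π
          = (∫⁻ z : Euc d × Euc d, ENNReal.ofReal |f z.1 - f z.2| ∂π).toReal :=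
        integral_eq_lintegral_of_nonneg_ae (Filter.Eventually.of_forall fun z => abs_nonneg _)
          ((hfm.comp measurable_fst).sub (hfm.comp measurable_snd)).abs.aestronglyMeasurable
      rw [heq2]
      have hlint : (∫⁻ z : Euc d × Euc d, ENNReal.ofReal |f z.1 - f z.2| ∂π) ≤
          ENNReal.ofReal ε₃ * π Set.univ + ENNReal.ofReal (2 * C) * π Bad := by
        calc (∫⁻ z : Euc d × Euc d, ENNReal.ofReal |f z.1 - f z.2| ∂π)
            ≤ ∫⁻ z : Euc d × Euc d,
                (ENNReal.ofReal ε₃ + Bad.indicator (fun _ => ENNReal.ofReal (2 * C)) z) ∂π :=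
              lintegral_mono hptw
          _ = ENNReal.ofReal ε₃ * π Set.univ + ENNReal.ofReal (2 * C) * π Bad := by
              rw [lintegral_add_left measurable_const, lintegral_const,
                lintegral_indicator_const hBadmeas]
      calc (∫⁻ z : Euc d × Euc d, ENNReal.ofReal |f z.1 - f z.2| ∂π).toReal
          ≤ (ENNReal.ofReal ε₃ * π Set.univ + ENNReal.ofReal (2 * C) * π Bad).toReal := by
            refine ENNReal.toReal_mono ?_ hlint
            exact ENNReal.add_ne_top.2 ⟨ENNReal.mul_ne_top ENNReal.ofReal_ne_top (by finiteness),
              ENNReal.mul_ne_top ENNReal.ofReal_ne_top (by finiteness)⟩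
        _ = ε₃ * (π Set.univ).toReal + 2 * C * (π Bad).toReal := by
            rw [ENNReal.toReal_add (ENNReal.mul_ne_top ENNReal.ofReal_ne_top (by finiteness))
              (ENNReal.mul_ne_top ENNReal.ofReal_ne_top (by finiteness)),
              ENNReal.toReal_mul, ENNReal.toReal_mul,
              ENNReal.toReal_ofReal hε₃.le, ENNReal.toReal_ofReal (by positivity)]
        _ ≤ ε₃ * M + 2 * C * (4 * θ) := by
            have hb : (π Bad).toReal ≤ 4 * θ := by
              calc (π Bad).toReal ≤ (ENNReal.ofReal (4 * θ)).toReal :=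
                    ENNReal.toReal_mono ENNReal.ofReal_ne_top hBad
                _ = 4 * θ := ENNReal.toReal_ofReal (by positivity)
            have h0 : (0:ℝ) ≤ 2 * C := by positivity
            nlinarith [ENNReal.toReal_nonneg (a := π Bad)]
    -- outer terms
    have T1 : |∫ x, f x ∂(μs n) - ∫ x, f x ∂μ'| ≤ C * θ := by
      refine le_trans (abs_integral_sub_le_tvDist (μs n) μ' f hfm C hC.le hfC) ?_
      have := le_trans htv1.le hε₁θ
      nlinarith [tvDist_nonneg (μs n) μ']
    have T3 : |∫ x, f x ∂μ - ∫ x, f x ∂ν'| ≤ C * θ := by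
      refine le_trans (abs_integral_sub_le_tvDist μ ν' f hfm C hC.le hfC) ?_
      have := le_trans htv2.le hε₁θ
      nlinarith [tvDist_nonneg μ ν']
    -- combine
    rw [Real.dist_eq]
    have hsplit : |∫ x, f x ∂(μs n) - ∫ x, f x ∂μ| ≤
        |∫ x, f x ∂(μs n) - ∫ x, f x ∂μ'| + |∫ x, f x ∂μ' - ∫ x, f x ∂ν'|
          + |∫ x, f x ∂μ - ∫ x, f x ∂ν'| := by
      have h := abs_sub_le (∫ x, f x ∂(μs n)) (∫ x, f x ∂μ') (∫ x, f x ∂μ)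
      have h2 := abs_sub_le (∫ x, f x ∂μ') (∫ x, f x ∂ν') (∫ x, f x ∂μ)
      have h3 : |∫ x, f x ∂ν' - ∫ x, f x ∂μ| = |∫ x, f x ∂μ - ∫ x, f x ∂ν'| := abs_sub_comm _ _
      linarith
    have hCθ : C * θ ≤ ε / 64 := by
      rw [hθdef, mul_div_assoc']
      rw [div_le_div_iff₀ (by positivity) (by norm_num)]
      nlinarith
    have hε₃M : ε₃ * M ≤ ε / 8 := by
      rw [hε₃def, mul_comm, mul_div_assoc']
      rw [div_le_div_iff₀ (by positivity) (by norm_num)]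
      nlinarith
    have h8Cθ : 2 * C * (4 * θ) ≤ ε / 8 := by nlinarith
    clear_value C M ε₃ θ
    calc |∫ x, f x ∂(μs n) - ∫ x, f x ∂μ| ≤ _ := hsplit
      _ ≤ C * θ + (ε₃ * M + 2 * C * (4 * θ)) + C * θ := by linarith
      _ < ε := by linarith [hCθ, hε₃M, h8Cθ, hε]
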